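/- Consider the post-collision momentum map in an orthonormal frame: for p,q∈ℝ³ and ω∈𝕊²⊂ℝ³, define p'(p,q,ω)∈ℝ³ componentwise by p'_j = p_j + 2(−q⁰(n·ω)/√s + q·ω + (n·ω)(n·q)/(√s(n⁰+√s)))·(ω_j + (n·ω)n_j/(√s(n⁰+√s))), where n=p+q, n⁰=p⁰+q⁰, s=(n⁰)²−|n|², and set q'(p,q,ω)=p+q−p'(p,q,ω). Then for every multi-index A∈ℕ³ with |A|≥1 there is a constant C>0, independent of p, such that for all p,q∈ℝ³ and ω∈𝕊², |∂^A_p p'(p,q,ω)| + |∂^A_p q'(p,q,ω)| ≤ C (q⁰)^{|A|+4}. -/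

import Mathlib

open Matrix

noncomputable section

/-- First-order partial derivative in the momentum variable `p_i`. -/
def pd (i : Fin 3) (f : (Fin 3 → ℝ) → ℝ) : (Fin 3 → ℝ) → ℝ :=
  fun p => fderiv ℝ f p (Pi.single i 1)

/-- Mixed partial derivative `∂^A` for a multi-index `A ∈ ℕ³`. -/
def multiDeriv (A : Fin 3 → ℕ) (f : (Fin 3 → ℝ) → ℝ) : (Fin 3 → ℝ) → ℝ :=
  (pd 0)^[A 0] ((pd 1)^[A 1] ((pd 2)^[A 2] f))

/-- Post-collision momentum `p'(p,q,ω)` in an orthonormal frame, with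
`p⁰ = √(1+|p|²)`, `n = p+q`, `n⁰ = p⁰+q⁰`, `s = (n⁰)² − |n|²`. -/
def postP (p q ω : Fin 3 → ℝ) : Fin 3 → ℝ := fun j =>
  let p0 := Real.sqrt (1 + p ⬝ᵥ p)
  let q0 := Real.sqrt (1 + q ⬝ᵥ q)
  let n := p + q
  let n0 := p0 + q0
  let s := n0^2 - n ⬝ᵥ n
  p j + 2 * (-(q0 * (n ⬝ᵥ ω) / Real.sqrt s) + q ⬝ᵥ ω
        + (n ⬝ᵥ ω) * (n ⬝ᵥ q) / (Real.sqrt s * (n0 + Real.sqrt s)))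
      * (ω j + (n ⬝ᵥ ω) * n j / (Real.sqrt s * (n0 + Real.sqrt s)))

/-- Post-collision momentum `q'(p,q,ω) = p + q − p'(p,q,ω)`. -/
def postQ (p q ω : Fin 3 → ℝ) : Fin 3 → ℝ := p + q - postP p q ω

namespace Collision



/-- energy `√(1+|p|²)` -/
def Pv (p : Fin 3 → ℝ) : ℝ := Real.sqrt (1 + p ⬝ᵥ p)

/-- `s` as an explicit function -/
def Sv (p q : Fin 3 → ℝ) : ℝ := 2 + 2 * Pv q * Pv p - 2 * (p ⬝ᵥ q)

def Rv (p q : Fin 3 → ℝ) : ℝ := Real.sqrt (Sv p q)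

def Gv (p q : Fin 3 → ℝ) : ℝ := Pv p + Pv q + Rv p q

lemma dot_self_nonneg (p : Fin 3 → ℝ) : 0 ≤ p ⬝ᵥ p := by
  exact Finset.sum_nonneg fun i _ => mul_self_nonneg _

lemma one_add_dot_pos (p : Fin 3 → ℝ) : 0 < 1 + p ⬝ᵥ p := by
  have := dot_self_nonneg p; linarith

lemma Pv_sq (p : Fin 3 → ℝ) : Pv p ^ 2 = 1 + p ⬝ᵥ p :=
  Real.sq_sqrt (one_add_dot_pos p).le

lemma one_le_Pv (p : Fin 3 → ℝ) : 1 ≤ Pv p := by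
  rw [show (1:ℝ) = Real.sqrt 1 by simp [Real.sqrt_one]]
  exact Real.sqrt_le_sqrt (by have := dot_self_nonneg p; linarith)

lemma Pv_pos (p : Fin 3 → ℝ) : 0 < Pv p := lt_of_lt_of_le one_pos (one_le_Pv p)

lemma Pv_ne (p : Fin 3 → ℝ) : Pv p ≠ 0 := (Pv_pos p).ne'

lemma sq_le_dot (p : Fin 3 → ℝ) (i : Fin 3) : p i ^ 2 ≤ p ⬝ᵥ p := by
  simp only [dotProduct, ← sq]
  exact Finset.single_le_sum (fun j _ => sq_nonneg (p j)) (Finset.mem_univ i)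

lemma abs_le_Pv (p : Fin 3 → ℝ) (i : Fin 3) : |p i| ≤ Pv p := by
  rw [← Real.sqrt_sq_eq_abs]
  exact Real.sqrt_le_sqrt (by have := sq_le_dot p i; linarith)

lemma dot_le (p q : Fin 3 → ℝ) : p ⬝ᵥ q ≤ Real.sqrt (p ⬝ᵥ p) * Real.sqrt (q ⬝ᵥ q) := by
  have h : (p ⬝ᵥ q)^2 ≤ (p ⬝ᵥ p) * (q ⬝ᵥ q) := by
    simpa [dotProduct, ← sq] using Finset.sum_mul_sq_le_sq_mul_sq Finset.univ p q
  calc p ⬝ᵥ q ≤ |p ⬝ᵥ q| := le_abs_self _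
    _ = Real.sqrt ((p ⬝ᵥ q)^2) := (Real.sqrt_sq_eq_abs _).symm
    _ ≤ Real.sqrt ((p ⬝ᵥ p) * (q ⬝ᵥ q)) := Real.sqrt_le_sqrt h
    _ = _ := Real.sqrt_mul (dot_self_nonneg p) _

lemma abs_dot_le (p q : Fin 3 → ℝ) : |p ⬝ᵥ q| ≤ Real.sqrt (p ⬝ᵥ p) * Real.sqrt (q ⬝ᵥ q) := by
  rcases abs_cases (p ⬝ᵥ q) with ⟨h, _⟩ | ⟨h, _⟩
  · rw [h]; exact dot_le p q
  · rw [h, show -(p ⬝ᵥ q) = (-p) ⬝ᵥ q by simp [neg_dotProduct]]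
    have := dot_le (-p) q
    simpa [neg_dotProduct] using this

lemma sqrt_dot_le_Pv (p : Fin 3 → ℝ) : Real.sqrt (p ⬝ᵥ p) ≤ Pv p :=
  Real.sqrt_le_sqrt (by linarith [dot_self_nonneg p])

lemma four_le_Sv (p q : Fin 3 → ℝ) : 4 ≤ Sv p q := by
  have hX : Real.sqrt (p ⬝ᵥ p) ^ 2 = p ⬝ᵥ p := Real.sq_sqrt (dot_self_nonneg p)
  have hY : Real.sqrt (q ⬝ᵥ q) ^ 2 = q ⬝ᵥ q := Real.sq_sqrt (dot_self_nonneg q)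
  have hu : p ⬝ᵥ q ≤ Real.sqrt (p ⬝ᵥ p) * Real.sqrt (q ⬝ᵥ q) := dot_le p q
  have hP := Pv_sq p; have hQ := Pv_sq q
  have hP1 := one_le_Pv p; have hQ1 := one_le_Pv q
  have hX0 : 0 ≤ Real.sqrt (p ⬝ᵥ p) := Real.sqrt_nonneg _
  have hY0 : 0 ≤ Real.sqrt (q ⬝ᵥ q) := Real.sqrt_nonneg _
  -- Pv p * Pv q ≥ 1 + X*Y  since (P Q)² - (1+XY)² = (X-Y)² + ... ≥ 0
  have key : 1 + Real.sqrt (p ⬝ᵥ p) * Real.sqrt (q ⬝ᵥ q) ≤ Pv q * Pv p := by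
    nlinarith [sq_nonneg (Real.sqrt (p ⬝ᵥ p) - Real.sqrt (q ⬝ᵥ q)),
      mul_pos (Pv_pos p) (Pv_pos q)]
  unfold Sv; nlinarith

lemma Sv_pos (p q : Fin 3 → ℝ) : 0 < Sv p q := by linarith [four_le_Sv p q]

lemma Rv_sq (p q : Fin 3 → ℝ) : Rv p q ^ 2 = Sv p q := Real.sq_sqrt (Sv_pos p q).le

lemma two_le_Rv (p q : Fin 3 → ℝ) : 2 ≤ Rv p q := by
  rw [show (2:ℝ) = Real.sqrt 4 by
    rw [show (4:ℝ) = 2^2 by norm_num, Real.sqrt_sq (by norm_num)]]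
  exact Real.sqrt_le_sqrt (four_le_Sv p q)

lemma Rv_pos (p q : Fin 3 → ℝ) : 0 < Rv p q := lt_of_lt_of_le two_pos (two_le_Rv p q)

lemma Rv_ne (p q : Fin 3 → ℝ) : Rv p q ≠ 0 := (Rv_pos p q).ne'

lemma one_le_Rv (p q : Fin 3 → ℝ) : 1 ≤ Rv p q := by linarith [two_le_Rv p q]

lemma Gv_pos (p q : Fin 3 → ℝ) : 0 < Gv p q := by
  unfold Gv; have := Pv_pos p; have := Pv_pos q; have := Rv_pos p q; linarith

lemma Gv_ne (p q : Fin 3 → ℝ) : Gv p q ≠ 0 := (Gv_pos p q).ne'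

lemma one_le_Gv (p q : Fin 3 → ℝ) : 1 ≤ Gv p q := by
  unfold Gv; have := one_le_Pv p; have := one_le_Pv q; have := Rv_pos p q; linarith

lemma Pv_le_Gv (p q : Fin 3 → ℝ) : Pv p ≤ Gv p q := by
  unfold Gv; have := Pv_pos q; have := Rv_pos p q; linarith

/-- the crucial inequality `p⁰ ≤ s q⁰` -/
lemma Pv_le_Sv_mul (p q : Fin 3 → ℝ) : Pv p ≤ Sv p q * Pv q := by
  set X := Real.sqrt (p ⬝ᵥ p) with hXdef
  set Y := Real.sqrt (q ⬝ᵥ q) with hYdef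
  have hX : X ^ 2 = p ⬝ᵥ p := Real.sq_sqrt (dot_self_nonneg p)
  have hY : Y ^ 2 = q ⬝ᵥ q := Real.sq_sqrt (dot_self_nonneg q)
  have hu : p ⬝ᵥ q ≤ X * Y := dot_le p q
  have hP := Pv_sq p; have hQ := Pv_sq q
  have hP1 := one_le_Pv p; have hQ1 := one_le_Pv q
  have hX0 : 0 ≤ X := Real.sqrt_nonneg _
  have hY0 : 0 ≤ Y := Real.sqrt_nonneg _
  have hPX : X ≤ Pv p := sqrt_dot_le_Pv p
  have hQY : Y ≤ Pv q := sqrt_dot_le_Pv q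
  -- 2 Q Y ≤ Q² + Y²  and  Q² = 1 + Y²
  have am : 2 * Pv q * Y ≤ Pv q ^ 2 + Y ^ 2 := by nlinarith [sq_nonneg (Pv q - Y)]
  unfold Sv
  nlinarith [mul_nonneg hX0 (sq_nonneg Y), Pv_pos q, Pv_pos p,
    mul_le_mul_of_nonneg_left hu (le_of_lt (mul_pos two_pos (Pv_pos q)))]



variable {p q : Fin 3 → ℝ} {i : Fin 3}

/-- "gradient" continuous linear map given by dotting with `v` -/
def DD (v : Fin 3 → ℝ) : (Fin 3 → ℝ) →L[ℝ] ℝ :=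
  ∑ k, v k • ContinuousLinearMap.proj k

lemma DD_apply (v x : Fin 3 → ℝ) : DD v x = ∑ k, v k * x k := by
  simp [DD]

lemma DD_single (v : Fin 3 → ℝ) (i : Fin 3) : DD v (Pi.single i 1) = v i := by
  rw [DD_apply]
  simp [Pi.single_apply]

lemma DD_ext {v : Fin 3 → ℝ} {L : (Fin 3 → ℝ) →L[ℝ] ℝ}
    (h : ∀ x, L x = ∑ k, v k * x k) : L = DD v := by
  ext x; rw [h, DD_apply]

lemma pd_of_hasFDerivAt {f : (Fin 3 → ℝ) → ℝ} {L : (Fin 3 → ℝ) →L[ℝ] ℝ}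
    (h : HasFDerivAt f L p) : pd i f p = L (Pi.single i 1) := by
  rw [pd, h.fderiv]

lemma pd_add {f g : (Fin 3 → ℝ) → ℝ} (hf : DifferentiableAt ℝ f p)
    (hg : DifferentiableAt ℝ g p) :
    pd i (fun x => f x + g x) p = pd i f p + pd i g p := by
  simp [pd, fderiv_fun_add hf hg]

lemma pd_mul {f g : (Fin 3 → ℝ) → ℝ} (hf : DifferentiableAt ℝ f p)
    (hg : DifferentiableAt ℝ g p) :
    pd i (fun x => f x * g x) p = pd i f p * g p + f p * pd i g p := by
  rw [pd, fderiv_fun_mul hf hg]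
  simp [pd]; ring

lemma pd_const_mul {f : (Fin 3 → ℝ) → ℝ} (c : ℝ) (hf : DifferentiableAt ℝ f p) :
    pd i (fun x => c * f x) p = c * pd i f p := by
  rw [pd, fderiv_const_mul hf]; simp [pd]

variable {p q : Fin 3 → ℝ} {i : Fin 3}

lemma hasF_dot1 : HasFDerivAt (fun x : Fin 3 → ℝ => 1 + x ⬝ᵥ x) (DD (2 • p)) p := by
  have h : ∀ k : Fin 3, HasFDerivAt (fun x : Fin 3 → ℝ => x k * x k)
      ((p k • ContinuousLinearMap.proj k : (Fin 3 → ℝ) →L[ℝ] ℝ)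
        + p k • ContinuousLinearMap.proj k) p := by
    intro k
    exact ((ContinuousLinearMap.proj (R := ℝ) (φ := fun _ : Fin 3 => ℝ) k).hasFDerivAt
      (x := p)).mul ((ContinuousLinearMap.proj (R := ℝ) (φ := fun _ : Fin 3 => ℝ) k).hasFDerivAt (x := p))
  have hs := HasFDerivAt.sum (fun k (_ : k ∈ Finset.univ) => h k)
  have : (fun x : Fin 3 → ℝ => 1 + x ⬝ᵥ x)
      = fun x : Fin 3 → ℝ => 1 + ∑ k, x k * x k := by
    funext x; simp [dotProduct]
  rw [this]
  have h2 := hs.const_add 1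
  refine h2.congr_fderiv ?_
  refine DD_ext fun x => ?_
  simp [ContinuousLinearMap.sum_apply, Finset.mul_sum]
  congr 1; funext k; ring

lemma hasF_dotq : HasFDerivAt (fun x : Fin 3 → ℝ => x ⬝ᵥ q) (DD q) p := by
  have h : ∀ k : Fin 3, HasFDerivAt (fun x : Fin 3 → ℝ => x k * q k)
      ((q k • ContinuousLinearMap.proj k : (Fin 3 → ℝ) →L[ℝ] ℝ)) p := by
    intro k
    simpa using ((ContinuousLinearMap.proj (R := ℝ) (φ := fun _ : Fin 3 => ℝ) k).hasFDerivAt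
      (x := p)).mul_const (q k)
  have hs := HasFDerivAt.sum (fun k (_ : k ∈ Finset.univ) => h k)
  have : (fun x : Fin 3 → ℝ => x ⬝ᵥ q) = fun x : Fin 3 → ℝ => ∑ k, x k * q k := by
    funext x; simp [dotProduct]
  rw [this]
  exact hs.congr_fderiv rfl

lemma hasF_Pv : HasFDerivAt Pv (DD ((Pv p)⁻¹ • p)) p := by
  have h1 : HasDerivAt Real.sqrt (1 / (2 * Pv p)) (1 + p ⬝ᵥ p) := by
    have := Real.hasDerivAt_sqrt (one_add_dot_pos p).ne'
    simpa [Pv] using this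
  have h2 := h1.comp_hasFDerivAt p hasF_dot1
  refine h2.congr_fderiv ?_
  refine DD_ext fun x => ?_
  have hne := Pv_ne p
  simp only [ContinuousLinearMap.smul_apply, DD_apply, smul_eq_mul, Pi.smul_apply,
    Finset.mul_sum]
  refine Finset.sum_congr rfl fun k _ => ?_
  field_simp
  ring

lemma hasF_Sv : HasFDerivAt (fun x => Sv x q)
    (DD ((2 * Pv q * (Pv p)⁻¹) • p - 2 • q)) p := by
  have h1 : HasFDerivAt (fun x => 2 * Pv q * Pv x) ((2 * Pv q) • DD ((Pv p)⁻¹ • p)) p :=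
    hasF_Pv.const_mul _
  have h2 : HasFDerivAt (fun x : Fin 3 → ℝ => 2 * (x ⬝ᵥ q)) ((2:ℝ) • DD q) p :=
    hasF_dotq.const_mul _
  have h3 := (h1.sub h2).const_add 2
  have : (fun x => Sv x q) = fun x => 2 + (2 * Pv q * Pv x - 2 * (x ⬝ᵥ q)) := by
    funext x; rw [Sv]; ring
  rw [this]
  refine h3.congr_fderiv ?_
  refine DD_ext fun x => ?_
  simp only [ContinuousLinearMap.sub_apply, ContinuousLinearMap.smul_apply, DD_apply,
    smul_eq_mul, Pi.smul_apply, Pi.sub_apply, Finset.mul_sum]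
  rw [← Finset.sum_sub_distrib]
  refine Finset.sum_congr rfl fun k _ => by push_cast; ring

lemma hasF_Rv : HasFDerivAt (fun x => Rv x q)
    (DD ((2 * Rv p q)⁻¹ • ((2 * Pv q * (Pv p)⁻¹) • p - 2 • q))) p := by
  have h1 : HasDerivAt Real.sqrt (1 / (2 * Rv p q)) (Sv p q) := by
    have := Real.hasDerivAt_sqrt (Sv_pos p q).ne'
    simpa [Rv] using this
  have h2 := h1.comp_hasFDerivAt p (hasF_Sv (q := q))
  refine h2.congr_fderiv ?_
  refine DD_ext fun x => ?_
  simp only [ContinuousLinearMap.smul_apply, DD_apply, smul_eq_mul, Pi.smul_apply,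
    Pi.sub_apply, Finset.mul_sum]
  refine Finset.sum_congr rfl fun k _ => by push_cast; ring

lemma hasF_Gv : HasFDerivAt (fun x => Gv x q)
    (DD ((Pv p)⁻¹ • p + (2 * Rv p q)⁻¹ • ((2 * Pv q * (Pv p)⁻¹) • p - 2 • q))) p := by
  have h := ((hasF_Pv (p := p)).add_const (Pv q)).add (hasF_Rv (p := p) (q := q))
  have : (fun x => Gv x q) = fun x => (Pv x + Pv q) + Rv x q := by
    funext x; rw [Gv]
  rw [this]
  refine h.congr_fderiv ?_
  refine DD_ext fun x => ?_
  simp only [ContinuousLinearMap.add_apply, ContinuousLinearMap.smul_apply, DD_apply,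
    smul_eq_mul, Pi.smul_apply, Pi.add_apply, Pi.sub_apply]
  rw [← Finset.sum_add_distrib]
  refine Finset.sum_congr rfl fun k _ => by push_cast; ring

lemma diff_Pv : DifferentiableAt ℝ Pv p := hasF_Pv.differentiableAt
lemma diff_Rv : DifferentiableAt ℝ (fun x => Rv x q) p := hasF_Rv.differentiableAt
lemma diff_Gv : DifferentiableAt ℝ (fun x => Gv x q) p := hasF_Gv.differentiableAt

/-- directional derivatives -/
lemma pd_Pv : pd i Pv p = (Pv p)⁻¹ * p i := by
  rw [show pd i Pv p = fderiv ℝ Pv p (Pi.single i 1) from rfl, hasF_Pv.fderiv]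
  rw [DD_apply]
  simp [Pi.single_apply, Finset.sum_ite_eq', Pi.smul_apply, smul_eq_mul]

lemma pd_Rv : pd i (fun x => Rv x q) p
    = (2 * Rv p q)⁻¹ * (2 * Pv q * (Pv p)⁻¹ * p i - 2 * q i) := by
  rw [show pd i (fun x => Rv x q) p = fderiv ℝ (fun x => Rv x q) p (Pi.single i 1) from rfl,
    (hasF_Rv (q := q)).fderiv, DD_apply]
  simp [Pi.single_apply, Finset.sum_ite_eq', Pi.smul_apply, smul_eq_mul]
  try ring

lemma pd_Gv : pd i (fun x => Gv x q) p
    = (Pv p)⁻¹ * p i + (2 * Rv p q)⁻¹ * (2 * Pv q * (Pv p)⁻¹ * p i - 2 * q i) := by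
  rw [show pd i (fun x => Gv x q) p = fderiv ℝ (fun x => Gv x q) p (Pi.single i 1) from rfl,
    (hasF_Gv (q := q)).fderiv, DD_apply]
  simp [Pi.single_apply, Finset.sum_ite_eq', Pi.smul_apply, smul_eq_mul]
  try ring


/-! ### monomials -/

lemma pd_Rv' : pd i (fun x => Rv x q) p
    = (Rv p q)⁻¹ * (Pv q * (Pv p)⁻¹ * p i - q i) := by
  rw [pd_Rv]
  have h2 : (2 : ℝ) ≠ 0 := two_ne_zero
  rw [mul_inv]
  ring

lemma pd_Gv' : pd i (fun x => Gv x q) p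
    = (Pv p)⁻¹ * p i + (Rv p q)⁻¹ * (Pv q * (Pv p)⁻¹ * p i - q i) := by
  rw [pd_Gv, mul_inv]; ring

lemma pd_coordpow (j : Fin 3) (m : ℕ) :
    pd i (fun x : Fin 3 → ℝ => x j ^ m) p
      = if i = j then (m : ℝ) * p j ^ (m - 1) else 0 := by
  have h0 := (hasDerivAt_pow m (p j)).comp_hasFDerivAt p
    ((ContinuousLinearMap.proj (R := ℝ) (φ := fun _ : Fin 3 => ℝ) j).hasFDerivAt (x := p))
  have h : HasFDerivAt (fun x : Fin 3 → ℝ => x j ^ m)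
      (((m : ℝ) * p j ^ (m - 1)) • (ContinuousLinearMap.proj j : (Fin 3 → ℝ) →L[ℝ] ℝ)) p := h0
  rw [pd_of_hasFDerivAt h]
  simp [Pi.single_apply, eq_comm]

lemma diff_coordpow (j : Fin 3) (m : ℕ) :
    DifferentiableAt ℝ (fun x : Fin 3 → ℝ => x j ^ m) p :=
  by
  have h0 := (hasDerivAt_pow m (p j)).comp_hasFDerivAt p
    ((ContinuousLinearMap.proj (R := ℝ) (φ := fun _ : Fin 3 => ℝ) j).hasFDerivAt (x := p))
  have h : HasFDerivAt (fun x : Fin 3 → ℝ => x j ^ m)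
      (((m : ℝ) * p j ^ (m - 1)) • (ContinuousLinearMap.proj j : (Fin 3 → ℝ) →L[ℝ] ℝ)) p := h0
  exact h.differentiableAt

/-- unit multi-index -/
def dlt (i : Fin 3) : Fin 3 → ℕ := Pi.single i 1

lemma sub_single_apply (a : Fin 3 → ℕ) (i k : Fin 3) :
    (a - dlt i) k = if k = i then a k - 1 else a k := by
  by_cases h : k = i
  · subst h; simp [Pi.sub_apply, dlt]
  · simp [Pi.sub_apply, dlt, Pi.single_eq_of_ne h, if_neg h]

lemma add_single_apply (a : Fin 3 → ℕ) (i k : Fin 3) :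
    (a + dlt i) k = if k = i then a k + 1 else a k := by
  by_cases h : k = i
  · subst h; simp [Pi.add_apply, dlt]
  · simp [Pi.add_apply, dlt, Pi.single_eq_of_ne h, if_neg h]

lemma prodpow_eq (a : Fin 3 → ℕ) :
    (fun x : Fin 3 → ℝ => ∏ k, x k ^ a k)
      = fun x => x 0 ^ a 0 * (x 1 ^ a 1 * x 2 ^ a 2) := by
  funext x; rw [Fin.prod_univ_three]; ring

lemma diff_A (a : Fin 3 → ℕ) : DifferentiableAt ℝ (fun x : Fin 3 → ℝ => ∏ k, x k ^ a k) p := by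
  rw [prodpow_eq]
  exact (diff_coordpow 0 (a 0)).mul ((diff_coordpow 1 (a 1)).mul (diff_coordpow 2 (a 2)))

lemma pd_A (a : Fin 3 → ℕ) :
    pd i (fun x : Fin 3 → ℝ => ∏ k, x k ^ a k) p
      = (a i : ℝ) * ∏ k, p k ^ ((a - dlt i) k) := by
  rw [prodpow_eq]
  rw [pd_mul (diff_coordpow 0 (a 0)) ((diff_coordpow 1 (a 1)).fun_mul (diff_coordpow 2 (a 2))),
    pd_mul (diff_coordpow 1 (a 1)) (diff_coordpow 2 (a 2)),
    pd_coordpow, pd_coordpow, pd_coordpow]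
  simp only [Fin.prod_univ_three, sub_single_apply]
  fin_cases i <;> simp <;> ring

lemma prod_pow_addsingle (a : Fin 3 → ℕ) (i : Fin 3) (p : Fin 3 → ℝ) :
    (∏ k, p k ^ ((a + dlt i) k)) = p i * ∏ k, p k ^ a k := by
  simp only [Fin.prod_univ_three, add_single_apply]
  fin_cases i <;> simp [pow_succ] <;> ring

/-- the basic monomial -/
def Mval (a : Fin 3 → ℕ) (b c f : ℤ) (p q : Fin 3 → ℝ) : ℝ :=
  (∏ k, p k ^ a k) * Pv p ^ b * Rv p q ^ c * Gv p q ^ f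

lemma hasF_Pzpow (b : ℤ) : HasFDerivAt (fun x => Pv x ^ b)
    (((b : ℝ) * Pv p ^ (b - 1)) • DD ((Pv p)⁻¹ • p)) p :=
  (hasDerivAt_zpow b (Pv p) (Or.inl (Pv_ne p))).comp_hasFDerivAt p hasF_Pv

lemma diff_Pzpow (b : ℤ) : DifferentiableAt ℝ (fun x => Pv x ^ b) p :=
  (hasF_Pzpow b).differentiableAt

lemma pd_Pzpow (b : ℤ) : pd i (fun x => Pv x ^ b) p
    = (b : ℝ) * Pv p ^ (b - 1) * ((Pv p)⁻¹ * p i) := by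
  rw [pd_of_hasFDerivAt (hasF_Pzpow b)]
  simp [DD_single]

lemma diff_Rzpow (c : ℤ) : DifferentiableAt ℝ (fun x => Rv x q ^ c) p :=
  ((hasDerivAt_zpow c (Rv p q) (Or.inl (Rv_ne p q))).comp_hasFDerivAt (h₂ := fun x : ℝ => x ^ c) p
    hasF_Rv).differentiableAt

lemma pd_Rzpow (c : ℤ) : pd i (fun x => Rv x q ^ c) p
    = (c : ℝ) * Rv p q ^ (c - 1) * ((Rv p q)⁻¹ * (Pv q * (Pv p)⁻¹ * p i - q i)) := by
  have h : HasFDerivAt (fun x => Rv x q ^ c)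
      (((c : ℝ) * Rv p q ^ (c - 1)) •
        DD ((2 * Rv p q)⁻¹ • ((2 * Pv q * (Pv p)⁻¹) • p - 2 • q))) p :=
    (hasDerivAt_zpow c (Rv p q) (Or.inl (Rv_ne p q))).comp_hasFDerivAt (h₂ := fun x : ℝ => x ^ c) p
      (hasF_Rv (p := p) (q := q))
  rw [pd_of_hasFDerivAt h]
  simp only [ContinuousLinearMap.smul_apply, smul_eq_mul, DD_single, Pi.smul_apply,
    Pi.sub_apply, mul_inv]
  ring

lemma diff_Gzpow (f : ℤ) : DifferentiableAt ℝ (fun x => Gv x q ^ f) p :=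
  ((hasDerivAt_zpow f (Gv p q) (Or.inl (Gv_ne p q))).comp_hasFDerivAt (h₂ := fun x : ℝ => x ^ f) p
    hasF_Gv).differentiableAt

lemma pd_Gzpow (f : ℤ) : pd i (fun x => Gv x q ^ f) p
    = (f : ℝ) * Gv p q ^ (f - 1)
      * ((Pv p)⁻¹ * p i + (Rv p q)⁻¹ * (Pv q * (Pv p)⁻¹ * p i - q i)) := by
  have h : HasFDerivAt (fun x => Gv x q ^ f)
      (((f : ℝ) * Gv p q ^ (f - 1)) •
        DD ((Pv p)⁻¹ • p + (2 * Rv p q)⁻¹ • ((2 * Pv q * (Pv p)⁻¹) • p - 2 • q))) p :=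
    (hasDerivAt_zpow f (Gv p q) (Or.inl (Gv_ne p q))).comp_hasFDerivAt (h₂ := fun x : ℝ => x ^ f) p
      (hasF_Gv (p := p) (q := q))
  rw [pd_of_hasFDerivAt h]
  simp only [ContinuousLinearMap.smul_apply, smul_eq_mul, DD_single, Pi.smul_apply,
    Pi.sub_apply, Pi.add_apply, mul_inv]
  ring

lemma diff_Mval (a : Fin 3 → ℕ) (b c f : ℤ) :
    DifferentiableAt ℝ (fun x => Mval a b c f x q) p := by
  unfold Mval
  exact (((diff_A a).mul (diff_Pzpow b)).mul (diff_Rzpow c)).mul (diff_Gzpow f)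

lemma zp2 {x : ℝ} (hx : x ≠ 0) (n : ℤ) : x ^ (n - 2) = x ^ n * x⁻¹ * x⁻¹ := by
  rw [show n - 2 = n - 1 - 1 by ring, zpow_sub_one₀ hx, zpow_sub_one₀ hx]

/-- THE key derivative formula for monomials. -/
lemma pd_Mval (a : Fin 3 → ℕ) (b c f : ℤ) :
    pd i (fun x => Mval a b c f x q) p =
      (a i : ℝ) * Mval (a - dlt i) b c f p q
      + (b : ℝ) * Mval (a + dlt i) (b - 2) c f p q
      + (c : ℝ) * Pv q * Mval (a + dlt i) (b - 1) (c - 2) f p q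
      - (c : ℝ) * q i * Mval a b (c - 2) f p q
      + (f : ℝ) * Mval (a + dlt i) (b - 1) c (f - 1) p q
      + (f : ℝ) * Pv q * Mval (a + dlt i) (b - 1) (c - 1) (f - 1) p q
      - (f : ℝ) * q i * Mval a b (c - 1) (f - 1) p q := by
  have hP := Pv_ne p
  have hR := Rv_ne p q
  have hG := Gv_ne p q
  unfold Mval
  rw [pd_mul (((diff_A a).fun_mul (diff_Pzpow b)).fun_mul (diff_Rzpow c)) (diff_Gzpow f),
    pd_mul ((diff_A a).fun_mul (diff_Pzpow b)) (diff_Rzpow c),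
    pd_mul (diff_A a) (diff_Pzpow b),
    pd_A, pd_Pzpow, pd_Rzpow, pd_Gzpow]
  simp only [prod_pow_addsingle]
  simp only [zp2 hP, zp2 hR, zpow_sub_one₀ hP, zpow_sub_one₀ hR, zpow_sub_one₀ hG]
  ring

/-! ### zpow toolkit -/

lemma zpow_le_one' {x : ℝ} (hx : 1 ≤ x) {n : ℤ} (hn : n ≤ 0) : x ^ n ≤ 1 := by
  have h := zpow_le_zpow_right₀ hx hn
  simpa using h

lemma one_le_zpow' {x : ℝ} (hx : 1 ≤ x) {n : ℤ} (hn : 0 ≤ n) : 1 ≤ x ^ n := by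
  have h := zpow_le_zpow_right₀ hx hn
  simpa using h

lemma zpow_le_zpow_base {x y : ℝ} (h0 : 0 ≤ x) (hxy : x ≤ y) {n : ℤ} (hn : 0 ≤ n) :
    x ^ n ≤ y ^ n := by
  obtain ⟨k, rfl⟩ := Int.eq_ofNat_of_zero_le hn
  rw [zpow_natCast, zpow_natCast]
  exact pow_le_pow_left₀ h0 hxy k

lemma zpow_le_zpow_base_neg {x y : ℝ} (h0 : 0 < x) (hxy : x ≤ y) {n : ℤ} (hn : n ≤ 0) :
    y ^ n ≤ x ^ n := by
  have hm : (0:ℤ) ≤ -n := by omega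
  obtain ⟨k, hk⟩ := Int.eq_ofNat_of_zero_le hm
  have hy0 : 0 < y := lt_of_lt_of_le h0 hxy
  have hn' : n = -(k:ℤ) := by omega
  rw [hn', _root_.zpow_neg, _root_.zpow_neg, zpow_natCast, zpow_natCast]
  exact inv_anti₀ (pow_pos h0 k) (pow_le_pow_left₀ h0.le hxy k)

/-- key pointwise bound for monomials -/
lemma Mval_bound (a : Fin 3 → ℕ) (b c f : ℤ) (hc : c ≤ 0) (hf : f ≤ 0)
    (hmu : 2 * ((∑ k, (a k : ℤ)) + b) + c + 2 * f ≤ 0) (p q : Fin 3 → ℝ) :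
    |Mval a b c f p q| ≤ Pv q ^ (max ((∑ k, (a k : ℤ)) + b + f) 0) := by
  set t : ℤ := (∑ k, (a k : ℤ)) + b with ht
  have hP1 := one_le_Pv p
  have hQ1 := one_le_Pv q
  have hP0 := Pv_pos p
  have hQ0 := Pv_pos q
  have hR1 := one_le_Rv p q
  have hR0 := Rv_pos p q
  have hG1 := one_le_Gv p q
  have hG0 := Gv_pos p q
  have hPG := Pv_le_Gv p q
  -- step 1 : |Mval| ≤ P^t R^c G^f
  have habs : |Mval a b c f p q| ≤ Pv p ^ t * Rv p q ^ c * Gv p q ^ f := by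
    have h1 : |∏ k, p k ^ a k| ≤ Pv p ^ (∑ k, (a k : ℤ)) := by
      calc |∏ k, p k ^ a k| = ∏ k, |p k| ^ a k := by
            rw [Finset.abs_prod]
            exact Finset.prod_congr rfl fun k _ => abs_pow _ _
        _ ≤ ∏ k, Pv p ^ a k :=
            Finset.prod_le_prod (fun k _ => pow_nonneg (abs_nonneg _) _)
              (fun k _ => pow_le_pow_left₀ (abs_nonneg _) (abs_le_Pv p k) _)
        _ = Pv p ^ (∑ k, a k) := by rw [← Finset.prod_pow_eq_pow_sum]
        _ = Pv p ^ ((∑ k, a k : ℕ) : ℤ) := by rw [zpow_natCast]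
        _ = Pv p ^ (∑ k, (a k : ℤ)) := by rw [Nat.cast_sum]
    have e1 : |Mval a b c f p q|
        = |∏ k, p k ^ a k| * Pv p ^ b * Rv p q ^ c * Gv p q ^ f := by
      unfold Mval
      rw [abs_mul, abs_mul, abs_mul, abs_of_pos (zpow_pos hP0 _),
        abs_of_pos (zpow_pos hR0 _), abs_of_pos (zpow_pos hG0 _)]
    rw [e1, ht, zpow_add₀ (ne_of_gt hP0)]
    have := mul_le_mul_of_nonneg_right h1 (zpow_pos hP0 b).le
    have h2 := mul_le_mul_of_nonneg_right this (zpow_pos hR0 c).le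
    have h3 := mul_le_mul_of_nonneg_right h2 (zpow_pos hG0 f).le
    exact h3
  have hRHS1 : (1:ℝ) ≤ Pv q ^ (max (t + f) 0) :=
    one_le_zpow' hQ1 (le_max_right _ _)
  rcases le_or_gt (t + f) 0 with htf | htf
  · -- t + f ≤ 0 : show P^t R^c G^f ≤ 1
    have hGP : Gv p q ^ f ≤ Pv p ^ f := zpow_le_zpow_base_neg hP0 hPG hf
    have key : Pv p ^ t * Rv p q ^ c * Gv p q ^ f ≤ 1 := by
      calc Pv p ^ t * Rv p q ^ c * Gv p q ^ f
          ≤ Pv p ^ t * Rv p q ^ c * Pv p ^ f := by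
            apply mul_le_mul_of_nonneg_left hGP
            exact mul_nonneg (zpow_pos hP0 t).le (zpow_pos hR0 c).le
        _ = Pv p ^ (t + f) * Rv p q ^ c := by
            rw [ht, zpow_add₀ (ne_of_gt hP0), zpow_add₀ (ne_of_gt hP0), zpow_add₀ (ne_of_gt hP0)]; ring
        _ ≤ 1 * 1 := by
            apply mul_le_mul (zpow_le_one' hP1 htf) (zpow_le_one' hR1 hc)
              (zpow_pos hR0 c).le zero_le_one
        _ = 1 := by ring
    exact le_trans habs (le_trans key hRHS1)
  · -- 0 < t + f
    have hmax : max (t + f) 0 = t + f := max_eq_left htf.le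
    have hGP : Gv p q ^ f ≤ Pv p ^ f := zpow_le_zpow_base_neg hP0 hPG hf
    have hPRQ : Pv p ^ (t + f) ≤ (Rv p q ^ (2:ℤ) * Pv q) ^ (t + f) := by
      apply zpow_le_zpow_base hP0.le _ htf.le
      have : Rv p q ^ (2:ℤ) = Sv p q := by
        rw [show (2:ℤ) = ((2:ℕ):ℤ) by norm_num, zpow_natCast, Rv_sq]
      rw [this]
      exact Pv_le_Sv_mul p q
    have hsplit : (Rv p q ^ (2:ℤ) * Pv q) ^ (t + f)
        = Rv p q ^ (2 * (t + f)) * Pv q ^ (t + f) := by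
      rw [mul_zpow, ← _root_.zpow_mul]
    have hRc : Rv p q ^ (2 * (t + f)) * Rv p q ^ c ≤ 1 := by
      rw [← zpow_add₀ (ne_of_gt hR0)]
      exact zpow_le_one' hR1 (by omega)
    calc |Mval a b c f p q| ≤ Pv p ^ t * Rv p q ^ c * Gv p q ^ f := habs
      _ ≤ Pv p ^ t * Rv p q ^ c * Pv p ^ f := by
          apply mul_le_mul_of_nonneg_left hGP
          exact mul_nonneg (zpow_pos hP0 t).le (zpow_pos hR0 c).le
      _ = Pv p ^ (t + f) * Rv p q ^ c := by
          rw [ht, zpow_add₀ (ne_of_gt hP0), zpow_add₀ (ne_of_gt hP0), zpow_add₀ (ne_of_gt hP0)]; ring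
      _ ≤ (Rv p q ^ (2:ℤ) * Pv q) ^ (t + f) * Rv p q ^ c :=
          mul_le_mul_of_nonneg_right hPRQ (zpow_pos hR0 c).le
      _ = (Rv p q ^ (2 * (t + f)) * Rv p q ^ c) * Pv q ^ (t + f) := by
          rw [hsplit]; ring
      _ ≤ 1 * Pv q ^ (t + f) :=
          mul_le_mul_of_nonneg_right hRc (zpow_pos hQ0 _).le
      _ = Pv q ^ (max (t + f) 0) := by rw [hmax]; ring

/-! ### representations as sums of monomials -/

structure Mono where
  γ : (Fin 3 → ℝ) → (Fin 3 → ℝ) → ℝ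
  Cg : ℝ
  j : ℕ
  a : Fin 3 → ℕ
  b : ℤ
  c : ℤ
  f : ℤ

namespace Mono

def t (m : Mono) : ℤ := (∑ k, (m.a k : ℤ)) + m.b

def val (m : Mono) (p q ω : Fin 3 → ℝ) : ℝ := m.γ q ω * Mval m.a m.b m.c m.f p q

def good (z l₁ l₂ : ℤ) (m : Mono) : Prop :=
  (∀ q ω : Fin 3 → ℝ, ω ⬝ᵥ ω = 1 → |m.γ q ω| ≤ m.Cg * Pv q ^ m.j) ∧
  m.c ≤ 0 ∧ m.f ≤ 0 ∧ 2 * m.t + m.c + 2 * m.f ≤ z ∧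
  (m.j : ℤ) + m.t + m.f ≤ l₁ ∧ (m.j : ℤ) ≤ l₂

def mul (m₁ m₂ : Mono) : Mono :=
  ⟨fun q ω => m₁.γ q ω * m₂.γ q ω, m₁.Cg * m₂.Cg, m₁.j + m₂.j,
    m₁.a + m₂.a, m₁.b + m₂.b, m₁.c + m₂.c, m₁.f + m₂.f⟩

lemma diff_val (m : Mono) (q ω : Fin 3 → ℝ) {p : Fin 3 → ℝ} :
    DifferentiableAt ℝ (fun x => m.val x q ω) p :=
  (diff_Mval m.a m.b m.c m.f).const_mul _

end Mono

lemma Mval_mul (a₁ a₂ : Fin 3 → ℕ) (b₁ b₂ c₁ c₂ f₁ f₂ : ℤ) (p q : Fin 3 → ℝ) :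
    Mval (a₁ + a₂) (b₁ + b₂) (c₁ + c₂) (f₁ + f₂) p q
      = Mval a₁ b₁ c₁ f₁ p q * Mval a₂ b₂ c₂ f₂ p q := by
  unfold Mval
  rw [zpow_add₀ (Pv_ne p), zpow_add₀ (Rv_ne p q), zpow_add₀ (Gv_ne p q)]
  rw [show (∏ k, p k ^ (a₁ + a₂) k) = (∏ k, p k ^ a₁ k) * ∏ k, p k ^ a₂ k by
    rw [← Finset.prod_mul_distrib]
    exact Finset.prod_congr rfl fun k _ => by rw [Pi.add_apply, pow_add]]
  ring

lemma mono_mul_val (m₁ m₂ : Mono) (p q ω : Fin 3 → ℝ) :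
    (m₁.mul m₂).val p q ω = m₁.val p q ω * m₂.val p q ω := by
  unfold Mono.val Mono.mul
  simp only []
  rw [Mval_mul]
  ring

def Rep (z l₁ l₂ : ℤ) (F : (Fin 3 → ℝ) → (Fin 3 → ℝ) → (Fin 3 → ℝ) → ℝ) : Prop :=
  ∃ L : List Mono, (∀ m ∈ L, m.good z l₁ l₂) ∧
    ∀ p q ω, F p q ω = (L.map (fun m => m.val p q ω)).sum

lemma Rep.weaken {z l₁ l₂ z' l₁' l₂' : ℤ} {F} (h : Rep z l₁ l₂ F)
    (hz : z ≤ z') (h1 : l₁ ≤ l₁') (h2 : l₂ ≤ l₂') : Rep z' l₁' l₂' F := by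
  obtain ⟨L, hg, hv⟩ := h
  refine ⟨L, fun m hm => ?_, hv⟩
  obtain ⟨hγ, hc, hf, hmu, hl1, hl2⟩ := hg m hm
  exact ⟨hγ, hc, hf, by omega, by omega, by omega⟩

lemma Rep.add {z l₁ l₂ : ℤ} {F G} (hF : Rep z l₁ l₂ F) (hG : Rep z l₁ l₂ G) :
    Rep z l₁ l₂ (fun p q ω => F p q ω + G p q ω) := by
  obtain ⟨L₁, hg₁, hv₁⟩ := hF
  obtain ⟨L₂, hg₂, hv₂⟩ := hG
  refine ⟨L₁ ++ L₂, fun m hm => ?_, fun p q ω => ?_⟩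
  · rcases List.mem_append.1 hm with h | h
    · exact hg₁ m h
    · exact hg₂ m h
  · show F p q ω + G p q ω = _
    rw [List.map_append, List.sum_append, hv₁, hv₂]

lemma list_sum_bind {α β : Type*} (l : List α) (D : α → List β) (v : β → ℝ) :
    (((l.flatMap D).map v).sum : ℝ) = (l.map (fun a => (((D a).map v).sum : ℝ))).sum := by
  induction l with
  | nil => simp
  | cons a l ih => simp [List.flatMap_cons, List.map_append, List.sum_append, ih]

lemma list_sum_mul_left (c : ℝ) {β : Type*} (l : List β) (v : β → ℝ) :
    (l.map (fun x => c * v x)).sum = c * (l.map v).sum := by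
  induction l with
  | nil => simp
  | cons a l ih => simp [ih]; ring

lemma list_sum_mul_right (c : ℝ) {β : Type*} (l : List β) (v : β → ℝ) :
    (l.map (fun x => v x * c)).sum = (l.map v).sum * c := by
  induction l with
  | nil => simp
  | cons a l ih => simp [ih]; ring

lemma Rep.mul {z l₁ l₂ w m₁ m₂ : ℤ} {F G} (hF : Rep z l₁ l₂ F) (hG : Rep w m₁ m₂ G) :
    Rep (z + w) (l₁ + m₁) (l₂ + m₂) (fun p q ω => F p q ω * G p q ω) := by
  obtain ⟨L₁, hg₁, hv₁⟩ := hF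
  obtain ⟨L₂, hg₂, hv₂⟩ := hG
  refine ⟨L₁.flatMap (fun n₁ => L₂.map (fun n₂ => n₁.mul n₂)), fun m hm => ?_, fun p q ω => ?_⟩
  · rw [List.mem_flatMap] at hm
    obtain ⟨n₁, hn₁, hm⟩ := hm
    rw [List.mem_map] at hm
    obtain ⟨n₂, hn₂, rfl⟩ := hm
    obtain ⟨hγ₁, hc₁, hf₁, hmu₁, ha₁, hb₁⟩ := hg₁ n₁ hn₁
    obtain ⟨hγ₂, hc₂, hf₂, hmu₂, ha₂, hb₂⟩ := hg₂ n₂ hn₂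
    have htadd : (n₁.mul n₂).t = n₁.t + n₂.t := by
      unfold Mono.t Mono.mul
      simp only [Pi.add_apply, Nat.cast_add, Finset.sum_add_distrib]
      ring
    refine ⟨fun q ω hω => ?_, ?_, ?_, ?_, ?_, ?_⟩
    · have h1 := hγ₁ q ω hω
      have h2 := hγ₂ q ω hω
      have := mul_le_mul h1 h2 (abs_nonneg _) (le_trans (abs_nonneg _) h1)
      calc |(n₁.mul n₂).γ q ω| = |n₁.γ q ω| * |n₂.γ q ω| := by
            unfold Mono.mul; simp only []; rw [abs_mul]
        _ ≤ n₁.Cg * Pv q ^ n₁.j * (n₂.Cg * Pv q ^ n₂.j) := this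
        _ = (n₁.mul n₂).Cg * Pv q ^ (n₁.mul n₂).j := by
            unfold Mono.mul; simp only []; rw [pow_add]; ring
    · show n₁.c + n₂.c ≤ 0; omega
    · show n₁.f + n₂.f ≤ 0; omega
    · show 2 * (n₁.mul n₂).t + (n₁.c + n₂.c) + 2 * (n₁.f + n₂.f) ≤ z + w
      rw [htadd]; omega
    · show ((n₁.j + n₂.j : ℕ) : ℤ) + (n₁.mul n₂).t + (n₁.f + n₂.f) ≤ l₁ + m₁
      rw [htadd]; push_cast; omega
    · show ((n₁.j + n₂.j : ℕ) : ℤ) ≤ l₂ + m₂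
      push_cast; omega
  · show F p q ω * G p q ω = _
    rw [hv₁, hv₂, list_sum_bind]
    have h1 : ∀ n₁ : Mono, ((L₂.map (fun n₂ => n₁.mul n₂)).map (fun m => m.val p q ω)).sum
        = n₁.val p q ω * (L₂.map (fun m => m.val p q ω)).sum := by
      intro n₁
      rw [List.map_map]
      have h0 : ((fun m : Mono => m.val p q ω) ∘ fun n₂ => n₁.mul n₂)
          = fun n₂ : Mono => n₁.val p q ω * n₂.val p q ω := by
        funext n₂; exact mono_mul_val n₁ n₂ p q ω
      rw [h0, list_sum_mul_left]
    have h2 : (L₁.map (fun a => ((L₂.map (fun n₂ => a.mul n₂)).map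
          (fun m => m.val p q ω)).sum))
        = L₁.map (fun a => a.val p q ω * (L₂.map (fun m => m.val p q ω)).sum) :=
      List.map_congr_left fun a _ => h1 a
    rw [h2, list_sum_mul_right]




/-! ### derivative of a representation -/

lemma sum_dlt_eq (i : Fin 3) : (∑ k, ((dlt i k : ℕ) : ℤ)) = 1 := by
  unfold dlt
  fin_cases i <;> simp [Fin.sum_univ_three, Pi.single_apply]

lemma sum_cast_add_dlt (a : Fin 3 → ℕ) (i : Fin 3) :
    (∑ k, (((a + dlt i) k : ℕ) : ℤ)) = (∑ k, (a k : ℤ)) + 1 := by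
  have h : ∀ k, (((a + dlt i) k : ℕ) : ℤ) = (a k : ℤ) + (dlt i k : ℤ) := by
    intro k; rw [Pi.add_apply]; push_cast; ring
  rw [Finset.sum_congr rfl fun k _ => h k, Finset.sum_add_distrib, sum_dlt_eq]

lemma sum_cast_sub_dlt (a : Fin 3 → ℕ) (i : Fin 3) (h : a i ≠ 0) :
    (∑ k, (((a - dlt i) k : ℕ) : ℤ)) = (∑ k, (a k : ℤ)) - 1 := by
  have h1 : ∀ k, (((a - dlt i) k : ℕ) : ℤ) = (a k : ℤ) - (dlt i k : ℤ) := by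
    intro k
    rw [Pi.sub_apply]
    rcases eq_or_ne k i with rfl | hk
    · rw [Nat.cast_sub]
      unfold dlt
      simp only [Pi.single_eq_same]
      omega
    · unfold dlt
      simp [Pi.single_eq_of_ne hk]
  rw [Finset.sum_congr rfl fun k _ => h1 k, Finset.sum_sub_distrib, sum_dlt_eq]

def Dmono (i : Fin 3) (m : Mono) : List Mono :=
  (if m.a i = 0 then [] else
    [⟨fun q ω => m.γ q ω * (m.a i : ℝ), m.Cg * (m.a i : ℝ), m.j, m.a - dlt i, m.b, m.c, m.f⟩])
  ++ [⟨fun q ω => m.γ q ω * (m.b : ℝ), m.Cg * |(m.b : ℝ)|, m.j, m.a + dlt i, m.b - 2, m.c, m.f⟩,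
      ⟨fun q ω => m.γ q ω * (m.c : ℝ) * Pv q, m.Cg * |(m.c : ℝ)|, m.j + 1,
        m.a + dlt i, m.b - 1, m.c - 2, m.f⟩,
      ⟨fun q ω => -(m.γ q ω * (m.c : ℝ) * q i), m.Cg * |(m.c : ℝ)|, m.j + 1,
        m.a, m.b, m.c - 2, m.f⟩,
      ⟨fun q ω => m.γ q ω * (m.f : ℝ), m.Cg * |(m.f : ℝ)|, m.j,
        m.a + dlt i, m.b - 1, m.c, m.f - 1⟩,
      ⟨fun q ω => m.γ q ω * (m.f : ℝ) * Pv q, m.Cg * |(m.f : ℝ)|, m.j + 1,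
        m.a + dlt i, m.b - 1, m.c - 1, m.f - 1⟩,
      ⟨fun q ω => -(m.γ q ω * (m.f : ℝ) * q i), m.Cg * |(m.f : ℝ)|, m.j + 1,
        m.a, m.b, m.c - 1, m.f - 1⟩]

lemma pd_monoval (i : Fin 3) (m : Mono) (p q ω : Fin 3 → ℝ) :
    pd i (fun x => m.val x q ω) p = ((Dmono i m).map (fun m' => m'.val p q ω)).sum := by
  have hd := diff_Mval (q := q) (p := p) m.a m.b m.c m.f
  have : (fun x => m.val x q ω) = fun x => m.γ q ω * Mval m.a m.b m.c m.f x q := rfl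
  rw [this, pd_const_mul _ hd, pd_Mval]
  by_cases h : m.a i = 0
  · simp only [Dmono, h, if_pos, List.nil_append, List.map_cons, List.map_nil,
      List.sum_cons, List.sum_nil, Mono.val, h, Nat.cast_zero]
    ring
  · simp only [Dmono, if_neg h, List.cons_append, List.nil_append, List.map_cons,
      List.map_nil, List.sum_cons, List.sum_nil, Mono.val]
    ring

lemma dmono_good {z l₁ l₂ : ℤ} {m : Mono} (i : Fin 3) (hm : m.good z l₁ l₂) :
    ∀ m' ∈ Dmono i m, m'.good (z - 2) (l₁ + 1) (l₂ + 1) := by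
  obtain ⟨hγ, hc, hf, hmu, hl1, hl2⟩ := hm
  intro m' hm'
  have hQ1 : ∀ q : Fin 3 → ℝ, (1:ℝ) ≤ Pv q := one_le_Pv
  have hQ0 : ∀ q : Fin 3 → ℝ, (0:ℝ) ≤ Pv q := fun q => (Pv_pos q).le
  rw [Dmono] at hm'
  rcases List.mem_append.1 hm' with h' | h'
  · -- the a-entry
    by_cases h : m.a i = 0
    · rw [if_pos h] at h'; simp at h'
    · rw [if_neg h] at h'
      simp only [List.mem_singleton] at h'
      subst h'
      have ht' : (∑ k, (((m.a - dlt i) k : ℕ) : ℤ)) = (∑ k, ((m.a k : ℕ) : ℤ)) - 1 :=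
        sum_cast_sub_dlt m.a i h
      refine ⟨fun q ω hω => ?_, hc, hf, ?_, ?_, ?_⟩
      · simp only [abs_mul, Nat.abs_cast]
        calc |m.γ q ω| * (m.a i : ℝ) ≤ m.Cg * Pv q ^ m.j * (m.a i : ℝ) :=
              mul_le_mul_of_nonneg_right (hγ q ω hω) (Nat.cast_nonneg _)
          _ = m.Cg * (m.a i : ℝ) * Pv q ^ m.j := by ring
      · show 2 * ((∑ k, (((m.a - dlt i) k : ℕ) : ℤ)) + m.b) + m.c + 2 * m.f ≤ z - 2
        rw [ht']; unfold Mono.t at hmu; omega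
      · show (m.j : ℤ) + ((∑ k, (((m.a - dlt i) k : ℕ) : ℤ)) + m.b) + m.f ≤ l₁ + 1
        rw [ht']; unfold Mono.t at hl1; omega
      · show (m.j : ℤ) ≤ l₂ + 1; omega
  · have ht' : (∑ k, (((m.a + dlt i) k : ℕ) : ℤ)) = (∑ k, ((m.a k : ℕ) : ℤ)) + 1 :=
      sum_cast_add_dlt m.a i
    unfold Mono.t at hmu hl1
    have habs : ∀ (x : ℝ) (n : ℤ) (q ω : Fin 3 → ℝ), ω ⬝ᵥ ω = 1 → |m.γ q ω| ≤ m.Cg * Pv q ^ m.j →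
        True := fun _ _ _ _ _ _ => trivial
    simp only [List.mem_cons, List.mem_singleton, List.not_mem_nil, or_false] at h'
    have key1 : ∀ q ω, ω ⬝ᵥ ω = 1 → ∀ n : ℤ, |m.γ q ω * (n : ℝ)| ≤ m.Cg * |(n : ℝ)| * Pv q ^ m.j := by
      intro q ω hω n
      rw [abs_mul]
      calc |m.γ q ω| * |(n:ℝ)| ≤ m.Cg * Pv q ^ m.j * |(n:ℝ)| :=
            mul_le_mul_of_nonneg_right (hγ q ω hω) (abs_nonneg _)
        _ = m.Cg * |(n:ℝ)| * Pv q ^ m.j := by ring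
    have key2 : ∀ q ω, ω ⬝ᵥ ω = 1 → ∀ n : ℤ, |m.γ q ω * (n : ℝ) * Pv q|
        ≤ m.Cg * |(n : ℝ)| * Pv q ^ (m.j + 1) := by
      intro q ω hω n
      rw [abs_mul, abs_of_nonneg (hQ0 q), pow_succ]
      calc |m.γ q ω * (n:ℝ)| * Pv q ≤ (m.Cg * |(n:ℝ)| * Pv q ^ m.j) * Pv q :=
            mul_le_mul_of_nonneg_right (key1 q ω hω n) (hQ0 q)
        _ = m.Cg * |(n:ℝ)| * (Pv q ^ m.j * Pv q) := by ring
    have key3 : ∀ q ω, ω ⬝ᵥ ω = 1 → ∀ n : ℤ, |-(m.γ q ω * (n : ℝ) * q i)|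
        ≤ m.Cg * |(n : ℝ)| * Pv q ^ (m.j + 1) := by
      intro q ω hω n
      rw [abs_neg, abs_mul, pow_succ]
      calc |m.γ q ω * (n:ℝ)| * |q i| ≤ (m.Cg * |(n:ℝ)| * Pv q ^ m.j) * Pv q := by
            apply mul_le_mul (key1 q ω hω n) (abs_le_Pv q i) (abs_nonneg _)
            exact le_trans (abs_nonneg _) (key1 q ω hω n)
        _ = m.Cg * |(n:ℝ)| * (Pv q ^ m.j * Pv q) := by ring
    rcases h' with rfl | rfl | rfl | rfl | rfl | rfl
    · exact ⟨fun q ω hω => key1 q ω hω m.b, hc, hf,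
        by show 2*((∑ k, (((m.a + dlt i) k : ℕ) : ℤ)) + (m.b - 2)) + m.c + 2*m.f ≤ z - 2
           rw [ht']; omega,
        by show (m.j:ℤ) + ((∑ k, (((m.a + dlt i) k : ℕ) : ℤ)) + (m.b - 2)) + m.f ≤ l₁ + 1
           rw [ht']; omega,
        by show (m.j:ℤ) ≤ l₂ + 1; omega⟩
    · exact ⟨fun q ω hω => key2 q ω hω m.c, by show m.c - 2 ≤ 0; omega, hf,
        by show 2*((∑ k, (((m.a + dlt i) k : ℕ) : ℤ)) + (m.b - 1)) + (m.c - 2) + 2*m.f ≤ z - 2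
           rw [ht']; omega,
        by show ((m.j+1:ℕ):ℤ) + ((∑ k, (((m.a + dlt i) k : ℕ) : ℤ)) + (m.b - 1)) + m.f ≤ l₁ + 1
           rw [ht']; push_cast; omega,
        by show ((m.j+1:ℕ):ℤ) ≤ l₂ + 1; push_cast; omega⟩
    · exact ⟨fun q ω hω => key3 q ω hω m.c, by show m.c - 2 ≤ 0; omega, hf,
        by show 2*((∑ k, ((m.a k : ℕ) : ℤ)) + m.b) + (m.c - 2) + 2*m.f ≤ z - 2; omega,
        by show ((m.j+1:ℕ):ℤ) + ((∑ k, ((m.a k : ℕ) : ℤ)) + m.b) + m.f ≤ l₁ + 1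
           push_cast; omega,
        by show ((m.j+1:ℕ):ℤ) ≤ l₂ + 1; push_cast; omega⟩
    · exact ⟨fun q ω hω => key1 q ω hω m.f, hc, by show m.f - 1 ≤ 0; omega,
        by show 2*((∑ k, (((m.a + dlt i) k : ℕ) : ℤ)) + (m.b - 1)) + m.c + 2*(m.f - 1) ≤ z - 2
           rw [ht']; omega,
        by show (m.j:ℤ) + ((∑ k, (((m.a + dlt i) k : ℕ) : ℤ)) + (m.b - 1)) + (m.f - 1) ≤ l₁ + 1
           rw [ht']; omega,
        by show (m.j:ℤ) ≤ l₂ + 1; omega⟩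
    · exact ⟨fun q ω hω => key2 q ω hω m.f, by show m.c - 1 ≤ 0; omega,
        by show m.f - 1 ≤ 0; omega,
        by show 2*((∑ k, (((m.a + dlt i) k : ℕ) : ℤ)) + (m.b - 1)) + (m.c - 1) + 2*(m.f - 1) ≤ z - 2
           rw [ht']; omega,
        by show ((m.j+1:ℕ):ℤ) + ((∑ k, (((m.a + dlt i) k : ℕ) : ℤ)) + (m.b - 1)) + (m.f - 1) ≤ l₁ + 1
           rw [ht']; push_cast; omega,
        by show ((m.j+1:ℕ):ℤ) ≤ l₂ + 1; push_cast; omega⟩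
    · exact ⟨fun q ω hω => key3 q ω hω m.f, by show m.c - 1 ≤ 0; omega,
        by show m.f - 1 ≤ 0; omega,
        by show 2*((∑ k, ((m.a k : ℕ) : ℤ)) + m.b) + (m.c - 1) + 2*(m.f - 1) ≤ z - 2; omega,
        by show ((m.j+1:ℕ):ℤ) + ((∑ k, ((m.a k : ℕ) : ℤ)) + m.b) + (m.f - 1) ≤ l₁ + 1
           push_cast; omega,
        by show ((m.j+1:ℕ):ℤ) ≤ l₂ + 1; push_cast; omega⟩

lemma diff_list_sum (L : List Mono) (q ω : Fin 3 → ℝ) {p : Fin 3 → ℝ} :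
    DifferentiableAt ℝ (fun x => (L.map (fun m => m.val x q ω)).sum) p := by
  induction L with
  | nil => simpa using (differentiableAt_const (0:ℝ))
  | cons m L ih =>
      have : (fun x => ((List.cons m L).map (fun m' => m'.val x q ω)).sum)
          = fun x => m.val x q ω + (L.map (fun m' => m'.val x q ω)).sum := by
        funext x; simp
      rw [this]
      exact (m.diff_val q ω).add ih

lemma pd_list_sum (i : Fin 3) (L : List Mono) (q ω p : Fin 3 → ℝ) :
    pd i (fun x => (L.map (fun m => m.val x q ω)).sum) p
      = (L.map (fun m => pd i (fun x => m.val x q ω) p)).sum := by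
  induction L with
  | nil => simp [pd]
  | cons m L ih =>
      have h1 : (fun x => ((List.cons m L).map (fun m' => m'.val x q ω)).sum)
          = fun x => m.val x q ω + (L.map (fun m' => m'.val x q ω)).sum := by
        funext x; simp
      rw [h1, pd_add (m.diff_val q ω) (diff_list_sum L q ω), ih]
      simp

lemma Rep.pdStep {z l₁ l₂ : ℤ} {F} (hF : Rep z l₁ l₂ F) (i : Fin 3) :
    Rep (z - 2) (l₁ + 1) (l₂ + 1) (fun p q ω => pd i (fun x => F x q ω) p) := by
  obtain ⟨L, hg, hv⟩ := hF
  refine ⟨L.flatMap (Dmono i), fun m' hm' => ?_, fun p q ω => ?_⟩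
  · rw [List.mem_flatMap] at hm'
    obtain ⟨m, hm, hm'⟩ := hm'
    exact dmono_good i (hg m hm) m' hm'
  · show pd i (fun x => F x q ω) p = _
    have h1 : (fun x => F x q ω) = fun x => (L.map (fun m => m.val x q ω)).sum := by
      funext x; exact hv x q ω
    rw [h1, pd_list_sum, list_sum_bind]
    congr 1
    exact List.map_congr_left fun m _ => pd_monoval i m p q ω



lemma list_abs_sum_le (L : List Mono) (v : Mono → ℝ) :
    |(L.map v).sum| ≤ (L.map (fun m => |v m|)).sum := by
  induction L with
  | nil => simp
  | cons m L ih =>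
      simp only [List.map_cons, List.sum_cons]
      exact le_trans (abs_add_le _ _) (by linarith)

lemma list_sum_le_sum (L : List Mono) (v w : Mono → ℝ) (h : ∀ m ∈ L, v m ≤ w m) :
    (L.map v).sum ≤ (L.map w).sum := by
  induction L with
  | nil => simp
  | cons m L ih =>
      simp only [List.map_cons, List.sum_cons]
      have h1 := h m List.mem_cons_self
      have h2 := ih fun m' hm' => h m' (List.mem_cons_of_mem _ hm')
      linarith

lemma list_sum_nonneg (L : List Mono) (v : Mono → ℝ) (h : ∀ m ∈ L, 0 ≤ v m) :
    0 ≤ (L.map v).sum := by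
  induction L with
  | nil => simp
  | cons m L ih =>
      simp only [List.map_cons, List.sum_cons]
      have h1 := h m List.mem_cons_self
      have h2 := ih fun m' hm' => h m' (List.mem_cons_of_mem _ hm')
      linarith

lemma Rep.bound {z l₁ l₂ : ℤ} {F} (h : Rep z l₁ l₂ F) (hz : z ≤ 0) (N : ℕ)
    (h1 : l₁ ≤ (N : ℤ)) (h2 : l₂ ≤ (N : ℤ)) :
    ∃ C > 0, ∀ p q ω : Fin 3 → ℝ, ω ⬝ᵥ ω = 1 → |F p q ω| ≤ C * Pv q ^ N := by
  obtain ⟨L, hg, hv⟩ := h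
  have hs0 : 0 ≤ (L.map (fun m => max m.Cg 0)).sum :=
    list_sum_nonneg L _ fun m _ => le_max_right _ _
  refine ⟨(L.map (fun m => max m.Cg 0)).sum + 1, by linarith, fun p q ω hω => ?_⟩
  have hQ1 := one_le_Pv q
  have hQ0 := Pv_pos q
  have hQN : (0:ℝ) ≤ Pv q ^ N := pow_nonneg hQ0.le N
  have key : ∀ m ∈ L, |m.val p q ω| ≤ max m.Cg 0 * Pv q ^ N := by
    intro m hm
    obtain ⟨hγ, hc, hf, hmu, hl1, hl2⟩ := hg m hm
    have hMb := Mval_bound m.a m.b m.c m.f hc hf (by unfold Mono.t at hmu; omega) p q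
    have hγ' := hγ q ω hω
    have e1 : |m.val p q ω| = |m.γ q ω| * |Mval m.a m.b m.c m.f p q| := by
      unfold Mono.val; rw [abs_mul]
    rw [e1]
    calc |m.γ q ω| * |Mval m.a m.b m.c m.f p q|
        ≤ (m.Cg * Pv q ^ m.j) * Pv q ^ (max ((∑ k, ((m.a k : ℕ):ℤ)) + m.b + m.f) 0) := by
          apply mul_le_mul hγ' hMb (abs_nonneg _)
          exact le_trans (abs_nonneg _) hγ'
      _ = m.Cg * (Pv q ^ ((m.j : ℤ) + max ((∑ k, ((m.a k : ℕ):ℤ)) + m.b + m.f) 0)) := by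
          rw [zpow_add₀ (ne_of_gt hQ0), zpow_natCast]; ring
      _ ≤ max m.Cg 0 * (Pv q ^ ((m.j : ℤ) + max ((∑ k, ((m.a k : ℕ):ℤ)) + m.b + m.f) 0)) := by
          apply mul_le_mul_of_nonneg_right (le_max_left _ _) (zpow_pos hQ0 _).le
      _ ≤ max m.Cg 0 * Pv q ^ (N : ℤ) := by
          apply mul_le_mul_of_nonneg_left _ (le_max_right _ _)
          apply zpow_le_zpow_right₀ hQ1
          unfold Mono.t at hl1
          omega
      _ = max m.Cg 0 * Pv q ^ N := by rw [zpow_natCast]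
  rw [hv]
  calc |(L.map (fun m => m.val p q ω)).sum|
      ≤ (L.map (fun m => |m.val p q ω|)).sum := list_abs_sum_le L _
    _ ≤ (L.map (fun m => max m.Cg 0 * Pv q ^ N)).sum := list_sum_le_sum L _ _ key
    _ = (L.map (fun m => max m.Cg 0)).sum * Pv q ^ N := list_sum_mul_right _ L _
    _ ≤ ((L.map (fun m => max m.Cg 0)).sum + 1) * Pv q ^ N := by
        apply mul_le_mul_of_nonneg_right _ hQN
        linarith

/-! ### atoms -/

lemma Mval_one (p q : Fin 3 → ℝ) : Mval (fun _ => 0) 0 0 0 p q = 1 := by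
  unfold Mval; simp

lemma rep_const (γ : (Fin 3 → ℝ) → (Fin 3 → ℝ) → ℝ) (Cg : ℝ) (j : ℕ)
    (h : ∀ q ω : Fin 3 → ℝ, ω ⬝ᵥ ω = 1 → |γ q ω| ≤ Cg * Pv q ^ j) :
    Rep 0 j j (fun _ q ω => γ q ω) := by
  refine ⟨[⟨γ, Cg, j, fun _ => 0, 0, 0, 0⟩], ?_, fun p q ω => ?_⟩
  · intro m hm
    simp only [List.mem_singleton] at hm
    subst hm
    exact ⟨h, le_refl 0, le_refl 0, by unfold Mono.t; simp, by unfold Mono.t; simp, by simp⟩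
  · simp [Mono.val, Mval_one]

lemma rep_coord (i : Fin 3) : Rep 2 1 0 (fun p _ _ => p i) := by
  refine ⟨[⟨fun _ _ => 1, 1, 0, dlt i, 0, 0, 0⟩], ?_, fun p q ω => ?_⟩
  · intro m hm
    simp only [List.mem_singleton] at hm
    subst hm
    refine ⟨fun q ω hω => by simp, le_refl 0, le_refl 0, ?_, ?_, by simp⟩
    · show 2 * ((∑ k, ((dlt i k : ℕ):ℤ)) + 0) + 0 + 2 * 0 ≤ 2
      rw [sum_dlt_eq]; norm_num
    · show (0:ℤ) + ((∑ k, ((dlt i k : ℕ):ℤ)) + 0) + 0 ≤ 1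
      rw [sum_dlt_eq]; norm_num
  · have : (∏ k, p k ^ dlt i k) = p i := by
      have h0 := prod_pow_addsingle (fun _ => 0) i p
      simpa using h0
    simp [Mono.val, Mval, this]

lemma rep_Pv : Rep 2 1 0 (fun p _ _ => Pv p) := by
  refine ⟨[⟨fun _ _ => 1, 1, 0, fun _ => 0, 1, 0, 0⟩], ?_, fun p q ω => ?_⟩
  · intro m hm
    simp only [List.mem_singleton] at hm
    subst hm
    exact ⟨fun q ω hω => by simp, le_refl 0, le_refl 0, by unfold Mono.t; simp,
      by unfold Mono.t; simp, by simp⟩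
  · simp [Mono.val, Mval]

lemma rep_Rinv : Rep (-1) 0 0 (fun p q _ => (Rv p q)⁻¹) := by
  refine ⟨[⟨fun _ _ => 1, 1, 0, fun _ => 0, 0, -1, 0⟩], ?_, fun p q ω => ?_⟩
  · intro m hm
    simp only [List.mem_singleton] at hm
    subst hm
    refine ⟨fun q ω hω => by simp, by norm_num, le_refl 0, ?_, ?_, by simp⟩
    · show 2 * ((∑ k, ((0:ℕ):ℤ)) + 0) + (-1) + 2 * 0 ≤ -1
      simp
    · show (0:ℤ) + ((∑ k, ((0:ℕ):ℤ)) + 0) + 0 ≤ 0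
      simp
  · simp [Mono.val, Mval, _root_.zpow_neg]

lemma rep_Ginv : Rep (-2) (-1) 0 (fun p q _ => (Gv p q)⁻¹) := by
  refine ⟨[⟨fun _ _ => 1, 1, 0, fun _ => 0, 0, 0, -1⟩], ?_, fun p q ω => ?_⟩
  · intro m hm
    simp only [List.mem_singleton] at hm
    subst hm
    refine ⟨fun q ω hω => by simp, le_refl 0, by norm_num, ?_, ?_, by simp⟩
    · show 2 * ((∑ k, ((0:ℕ):ℤ)) + 0) + 0 + 2 * (-1) ≤ -2
      simp
    · show (0:ℤ) + ((∑ k, ((0:ℕ):ℤ)) + 0) + (-1) ≤ -1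
      simp
  · simp [Mono.val, Mval, _root_.zpow_neg]



lemma abs_omega_le {ω : Fin 3 → ℝ} (hω : ω ⬝ᵥ ω = 1) (i : Fin 3) : |ω i| ≤ 1 := by
  have h := sq_le_dot ω i
  rw [hω] at h
  rw [← Real.sqrt_one, ← Real.sqrt_sq_eq_abs]
  exact Real.sqrt_le_sqrt h

lemma abs_qdotomega_le (q : Fin 3 → ℝ) {ω : Fin 3 → ℝ} (hω : ω ⬝ᵥ ω = 1) :
    |q ⬝ᵥ ω| ≤ Pv q := by
  have h := abs_dot_le q ω
  rw [hω, Real.sqrt_one, mul_one] at h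
  exact le_trans h (sqrt_dot_le_Pv q)

/-- sqrt s = Rv -/
lemma sqrt_s_eq (p q : Fin 3 → ℝ) :
    Real.sqrt ((Real.sqrt (1 + p ⬝ᵥ p) + Real.sqrt (1 + q ⬝ᵥ q))^2 - (p+q) ⬝ᵥ (p+q))
      = Rv p q := by
  have hd : (p+q) ⬝ᵥ (p+q) = p ⬝ᵥ p + 2 * (p ⬝ᵥ q) + q ⬝ᵥ q := by
    rw [add_dotProduct, dotProduct_add, dotProduct_add,
      dotProduct_comm q p]
    ring
  have h1 : (Real.sqrt (1 + p ⬝ᵥ p) + Real.sqrt (1 + q ⬝ᵥ q))^2 - (p+q) ⬝ᵥ (p+q)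
      = Sv p q := by
    have hp := Pv_sq p
    have hq := Pv_sq q
    unfold Pv at hp hq
    unfold Sv Pv
    rw [hd]
    nlinarith [hp, hq]
  rw [h1, Rv]

/-- rewriting the collision factor -/
lemma postP_eq (p q ω : Fin 3 → ℝ) (j : Fin 3) :
    postP p q ω j
      = p j + 2 * ((q ⬝ᵥ ω) + (-(1:ℝ)/2) * ((((p+q) ⬝ᵥ ω) * (Sv p q * (Rv p q)⁻¹ + 2 * Pv q))
            * (Gv p q)⁻¹))
          * (ω j + ((p+q) ⬝ᵥ ω) * ((p j + q j) * ((Rv p q)⁻¹ * (Gv p q)⁻¹))) := by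
  have hR := Rv_ne p q
  have hG := Gv_ne p q
  have hP := Pv_ne p
  have hQn := Pv_ne q
  have hS : Sv p q = Rv p q ^ 2 := (Rv_sq p q).symm
  have hGval : Gv p q = Pv p + Pv q + Rv p q := rfl
  have hqq : q ⬝ᵥ q = Pv q ^ 2 - 1 := by have := Pv_sq q; linarith
  have hpq : p ⬝ᵥ q = 1 + Pv q * Pv p - Rv p q ^ 2 / 2 := by
    have : Sv p q = 2 + 2 * Pv q * Pv p - 2 * (p ⬝ᵥ q) := rfl
    rw [← hS]; linarith
  show p j + 2 * (-(Real.sqrt (1 + q ⬝ᵥ q) * ((p+q) ⬝ᵥ ω) / Real.sqrt _) + q ⬝ᵥ ω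
        + ((p+q) ⬝ᵥ ω) * ((p+q) ⬝ᵥ q) / (Real.sqrt _ * ((Real.sqrt (1 + p ⬝ᵥ p) + Real.sqrt (1 + q ⬝ᵥ q)) + Real.sqrt _)))
      * (ω j + ((p+q) ⬝ᵥ ω) * (p+q) j / (Real.sqrt _ * ((Real.sqrt (1 + p ⬝ᵥ p) + Real.sqrt (1 + q ⬝ᵥ q)) + Real.sqrt _))) = _
  rw [sqrt_s_eq p q]
  have hnq : (p+q) ⬝ᵥ q = p ⬝ᵥ q + q ⬝ᵥ q := by rw [add_dotProduct]
  have hnj : (p+q) j = p j + q j := rfl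
  have hPv : Real.sqrt (1 + p ⬝ᵥ p) = Pv p := rfl
  have hQv : Real.sqrt (1 + q ⬝ᵥ q) = Pv q := rfl
  rw [hnq, hnj, hPv, hQv, hpq, hqq, hS, hGval]
  have hPQR : Pv p + Pv q + Rv p q ≠ 0 := by rw [← hGval]; exact hG
  field_simp
  ring
lemma Rep.congr {z l₁ l₂ : ℤ} {F G} (h : Rep z l₁ l₂ F)
    (hFG : ∀ p q ω, F p q ω = G p q ω) : Rep z l₁ l₂ G := by
  obtain ⟨L, hg, hv⟩ := h
  exact ⟨L, hg, fun p q ω => (hFG p q ω) ▸ hv p q ω⟩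

lemma rep_omega (i : Fin 3) : Rep 0 0 0 (fun _ _ ω : Fin 3 → ℝ => ω i) :=
  rep_const (fun _ ω => ω i) 1 0 (fun q ω hω => by simpa using abs_omega_le hω i)

lemma rep_qcoord (i : Fin 3) : Rep 0 1 1 (fun _ q _ : Fin 3 → ℝ => q i) :=
  rep_const (fun q _ => q i) 1 1 (fun q ω hω => by simpa using abs_le_Pv q i)

lemma rep_Qv : Rep 0 1 1 (fun _ q _ : Fin 3 → ℝ => Pv q) :=
  rep_const (fun q _ => Pv q) 1 1 (fun q ω hω => by
    rw [abs_of_pos (Pv_pos q)]; simp)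

lemma rep_qomega : Rep 0 1 1 (fun _ q ω : Fin 3 → ℝ => q ⬝ᵥ ω) :=
  rep_const (fun q ω => q ⬝ᵥ ω) 1 1 (fun q ω hω => by
    simpa using abs_qdotomega_le q hω)

lemma rep_num (r : ℝ) : Rep 0 0 0 (fun _ _ _ : Fin 3 → ℝ => r) :=
  rep_const (fun _ _ => r) |r| 0 (fun q ω hω => by simp)

lemma rep_nomega : Rep 2 1 1 (fun p q ω : Fin 3 → ℝ => (p + q) ⬝ᵥ ω) := by
  have t0 := ((rep_omega 0).mul (rep_coord 0)).weaken (by norm_num) (by norm_num) (by norm_num)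
    (z' := 2) (l₁' := 1) (l₂' := 1)
  have t1 := ((rep_omega 1).mul (rep_coord 1)).weaken (by norm_num) (by norm_num) (by norm_num)
    (z' := 2) (l₁' := 1) (l₂' := 1)
  have t2 := ((rep_omega 2).mul (rep_coord 2)).weaken (by norm_num) (by norm_num) (by norm_num)
    (z' := 2) (l₁' := 1) (l₂' := 1)
  have tq := rep_qomega.weaken (by norm_num) (by norm_num) (by norm_num)
    (z' := 2) (l₁' := 1) (l₂' := 1)
  refine (((t0.add t1).add t2).add tq).congr fun p q ω => ?_
  rw [add_dotProduct]
  simp only [dotProduct, Fin.sum_univ_three]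
  ring

lemma rep_Sv : Rep 2 2 1 (fun p q ω : Fin 3 → ℝ => Sv p q) := by
  have c2 := (rep_num 2).weaken (by norm_num) (by norm_num) (by norm_num)
    (z' := 2) (l₁' := 2) (l₂' := 1)
  have hA := ((rep_num 2).mul (rep_Qv.mul rep_Pv)).weaken (by norm_num) (by norm_num)
    (by norm_num) (z' := 2) (l₁' := 2) (l₂' := 1)
  have hqp : Rep 2 2 1 (fun p q ω : Fin 3 → ℝ => q ⬝ᵥ p) := by
    have u0 := ((rep_qcoord 0).mul (rep_coord 0)).weaken (by norm_num) (by norm_num)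
      (by norm_num) (z' := 2) (l₁' := 2) (l₂' := 1)
    have u1 := ((rep_qcoord 1).mul (rep_coord 1)).weaken (by norm_num) (by norm_num)
      (by norm_num) (z' := 2) (l₁' := 2) (l₂' := 1)
    have u2 := ((rep_qcoord 2).mul (rep_coord 2)).weaken (by norm_num) (by norm_num)
      (by norm_num) (z' := 2) (l₁' := 2) (l₂' := 1)
    refine ((u0.add u1).add u2).congr fun p q ω => ?_
    simp only [dotProduct, Fin.sum_univ_three]
  have hB := ((rep_num (-2)).mul hqp).weaken (by norm_num) (by norm_num) (by norm_num)
    (z' := 2) (l₁' := 2) (l₂' := 1)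
  refine ((c2.add hA).add hB).congr fun p q ω => ?_
  unfold Sv
  rw [dotProduct_comm q p]
  ring

lemma rep_postP (j : Fin 3) : Rep 2 3 4 (fun p q ω => postP p q ω j) := by
  have hsqrtS : Rep 1 2 1 (fun p q ω : Fin 3 → ℝ => Sv p q * (Rv p q)⁻¹) := by
    have h := rep_Sv.mul rep_Rinv
    exact h.weaken (by norm_num) (by norm_num) (by norm_num)
  have hu : Rep 1 2 1 (fun p q ω : Fin 3 → ℝ => Sv p q * (Rv p q)⁻¹ + 2 * Pv q) := by
    have h2 := ((rep_num 2).mul rep_Qv).weaken (by norm_num) (by norm_num) (by norm_num)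
      (z' := 1) (l₁' := 2) (l₂' := 1)
    exact hsqrtS.add h2
  have hM2 : Rep 1 2 2 (fun p q ω : Fin 3 → ℝ =>
      (((p+q) ⬝ᵥ ω) * (Sv p q * (Rv p q)⁻¹ + 2 * Pv q)) * (Gv p q)⁻¹) := by
    have h := (rep_nomega.mul hu).mul rep_Ginv
    exact h.weaken (by norm_num) (by norm_num) (by norm_num)
  have hM : Rep 1 2 2 (fun p q ω : Fin 3 → ℝ =>
      (q ⬝ᵥ ω) + (-(1:ℝ)/2) * ((((p+q) ⬝ᵥ ω) * (Sv p q * (Rv p q)⁻¹ + 2 * Pv q))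
        * (Gv p q)⁻¹)) := by
    have h1 := rep_qomega.weaken (by norm_num) (by norm_num) (by norm_num)
      (z' := 1) (l₁' := 2) (l₂' := 2)
    have h2 := ((rep_num (-(1:ℝ)/2)).mul hM2).weaken (by norm_num) (by norm_num) (by norm_num)
      (z' := 1) (l₁' := 2) (l₂' := 2)
    exact h1.add h2
  have hpjqj : Rep 2 1 1 (fun p q ω : Fin 3 → ℝ => p j + q j) := by
    have h1 := (rep_coord j).weaken (by norm_num) (by norm_num) (by norm_num)
      (z' := 2) (l₁' := 1) (l₂' := 1)
    have h2 := (rep_qcoord j).weaken (by norm_num) (by norm_num) (by norm_num)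
      (z' := 2) (l₁' := 1) (l₂' := 1)
    exact h1.add h2
  have hV2 : Rep 1 1 2 (fun p q ω : Fin 3 → ℝ =>
      ((p+q) ⬝ᵥ ω) * ((p j + q j) * ((Rv p q)⁻¹ * (Gv p q)⁻¹))) := by
    have h := rep_nomega.mul (hpjqj.mul (rep_Rinv.mul rep_Ginv))
    exact h.weaken (by norm_num) (by norm_num) (by norm_num)
  have hV : Rep 1 1 2 (fun p q ω : Fin 3 → ℝ =>
      ω j + ((p+q) ⬝ᵥ ω) * ((p j + q j) * ((Rv p q)⁻¹ * (Gv p q)⁻¹))) := by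
    have h1 := (rep_omega j).weaken (by norm_num) (by norm_num) (by norm_num)
      (z' := 1) (l₁' := 1) (l₂' := 2)
    exact h1.add hV2
  have hF : Rep 2 3 4 (fun p q ω : Fin 3 → ℝ =>
      (2:ℝ) * (((q ⬝ᵥ ω) + (-(1:ℝ)/2) * ((((p+q) ⬝ᵥ ω) * (Sv p q * (Rv p q)⁻¹ + 2 * Pv q))
          * (Gv p q)⁻¹))
        * (ω j + ((p+q) ⬝ᵥ ω) * ((p j + q j) * ((Rv p q)⁻¹ * (Gv p q)⁻¹))))) := by
    have h := (rep_num 2).mul (hM.mul hV)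
    exact h.weaken (by norm_num) (by norm_num) (by norm_num)
  have hcoord := (rep_coord j).weaken (by norm_num) (by norm_num) (by norm_num)
    (z' := 2) (l₁' := 3) (l₂' := 4)
  refine (hcoord.add hF).congr fun p q ω => ?_
  rw [postP_eq p q ω j]
  ring

lemma rep_postQ (j : Fin 3) : Rep 2 3 4 (fun p q ω => postQ p q ω j) := by
  have h1 := (rep_coord j).weaken (by norm_num) (by norm_num) (by norm_num)
    (z' := 2) (l₁' := 3) (l₂' := 4)
  have h2 := (rep_qcoord j).weaken (by norm_num) (by norm_num) (by norm_num)
    (z' := 2) (l₁' := 3) (l₂' := 4)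
  have h3 := ((rep_num (-1)).mul (rep_postP j)).weaken (by norm_num) (by norm_num)
    (by norm_num) (z' := 2) (l₁' := 3) (l₂' := 4)
  refine ((h1.add h2).add h3).congr fun p q ω => ?_
  show p j + q j + (-1 : ℝ) * postP p q ω j = postQ p q ω j
  unfold postQ
  simp only [Pi.sub_apply, Pi.add_apply]
  ring

lemma Rep.pdIter {z l₁ l₂ : ℤ} {F} (h : Rep z l₁ l₂ F) (i : Fin 3) (k : ℕ) :
    Rep (z - 2*(k:ℤ)) (l₁ + (k:ℤ)) (l₂ + (k:ℤ))
      (fun p q ω => (pd i)^[k] (fun x => F x q ω) p) := by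
  induction k with
  | zero => simpa using h
  | succ k ih =>
      have h2 := ih.pdStep i
      have h3 : Rep (z - 2*(k:ℤ) - 2) (l₁ + (k:ℤ) + 1) (l₂ + (k:ℤ) + 1)
          (fun p q ω => (pd i)^[k+1] (fun x => F x q ω) p) := by
        simp only [Function.iterate_succ_apply']
        exact h2
      exact h3.weaken (by push_cast; omega) (by push_cast; omega) (by push_cast; omega)

lemma Rep.multiDerivRep {z l₁ l₂ : ℤ} {F} (h : Rep z l₁ l₂ F) (A : Fin 3 → ℕ) :
    Rep (z - 2*((∑ i, A i : ℕ):ℤ)) (l₁ + ((∑ i, A i : ℕ):ℤ)) (l₂ + ((∑ i, A i : ℕ):ℤ))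
      (fun p q ω => multiDeriv A (fun x => F x q ω) p) := by
  have h2 := h.pdIter 2 (A 2)
  have h1 := h2.pdIter 1 (A 1)
  have h0 := h1.pdIter 0 (A 0)
  have e : (∑ i, A i) = A 0 + A 1 + A 2 := by rw [Fin.sum_univ_three]
  have h4 : Rep (z - 2*(A 2:ℤ) - 2*(A 1:ℤ) - 2*(A 0:ℤ))
      (l₁ + (A 2:ℤ) + (A 1:ℤ) + (A 0:ℤ)) (l₂ + (A 2:ℤ) + (A 1:ℤ) + (A 0:ℤ))
      (fun p q ω => multiDeriv A (fun x => F x q ω) p) := by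
    unfold multiDeriv
    exact h0
  exact h4.weaken (by rw [e]; push_cast; omega) (by rw [e]; push_cast; omega)
    (by rw [e]; push_cast; omega)

lemma sqrt_sum_sq_le (x : Fin 3 → ℝ) : Real.sqrt (∑ j, x j ^ 2) ≤ ∑ j, |x j| := by
  have h1 : (∑ j, x j ^ 2) ≤ (∑ j, |x j|) ^ 2 := by
    rw [Fin.sum_univ_three, Fin.sum_univ_three]
    nlinarith [sq_abs (x 0), sq_abs (x 1), sq_abs (x 2),
      mul_nonneg (abs_nonneg (x 0)) (abs_nonneg (x 1)),
      mul_nonneg (abs_nonneg (x 0)) (abs_nonneg (x 2)),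
      mul_nonneg (abs_nonneg (x 1)) (abs_nonneg (x 2))]
  calc Real.sqrt (∑ j, x j ^ 2) ≤ Real.sqrt ((∑ j, |x j|) ^ 2) := Real.sqrt_le_sqrt h1
    _ = ∑ j, |x j| := Real.sqrt_sq (by positivity)

theorem main (A : Fin 3 → ℕ) (hA : 1 ≤ ∑ i, A i) :
    ∃ C > 0, ∀ p q ω : Fin 3 → ℝ, ω ⬝ᵥ ω = 1 →
      Real.sqrt (∑ j, (multiDeriv A (fun x => postP x q ω j) p)^2)
        + Real.sqrt (∑ j, (multiDeriv A (fun x => postQ x q ω j) p)^2)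
        ≤ C * Real.sqrt (1 + q ⬝ᵥ q) ^ ((∑ i, A i) + 4) := by
  have key : ∀ G : (Fin 3 → ℝ) → (Fin 3 → ℝ) → (Fin 3 → ℝ) → ℝ, Rep 2 3 4 G →
      ∃ C > 0, ∀ p q ω : Fin 3 → ℝ, ω ⬝ᵥ ω = 1 →
        |multiDeriv A (fun x => G x q ω) p| ≤ C * Pv q ^ ((∑ i, A i) + 4) := by
    intro G hG
    have h := hG.multiDerivRep A
    have hb := h.bound (by omega) ((∑ i, A i) + 4) (by push_cast; omega) (by push_cast; omega)
    obtain ⟨C, hC0, hC⟩ := hb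
    exact ⟨C, hC0, fun p q ω hω => hC p q ω hω⟩
  obtain ⟨C0, hC00, hC0b⟩ := key _ (rep_postP 0)
  obtain ⟨C1, hC10, hC1b⟩ := key _ (rep_postP 1)
  obtain ⟨C2, hC20, hC2b⟩ := key _ (rep_postP 2)
  obtain ⟨D0, hD00, hD0b⟩ := key _ (rep_postQ 0)
  obtain ⟨D1, hD10, hD1b⟩ := key _ (rep_postQ 1)
  obtain ⟨D2, hD20, hD2b⟩ := key _ (rep_postQ 2)
  refine ⟨C0 + C1 + C2 + (D0 + D1 + D2), by linarith, fun p q ω hω => ?_⟩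
  have hQv : Real.sqrt (1 + q ⬝ᵥ q) = Pv q := rfl
  rw [hQv]
  have hQN : (0:ℝ) ≤ Pv q ^ ((∑ i, A i) + 4) := pow_nonneg (Pv_pos q).le _
  have e1 : Real.sqrt (∑ j, (multiDeriv A (fun x => postP x q ω j) p)^2)
      ≤ (C0 + C1 + C2) * Pv q ^ ((∑ i, A i) + 4) := by
    calc Real.sqrt (∑ j, (multiDeriv A (fun x => postP x q ω j) p)^2)
        ≤ ∑ j, |multiDeriv A (fun x => postP x q ω j) p| :=
          sqrt_sum_sq_le _
      _ ≤ (C0 + C1 + C2) * Pv q ^ ((∑ i, A i) + 4) := by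
          rw [Fin.sum_univ_three]
          have b0 := hC0b p q ω hω
          have b1 := hC1b p q ω hω
          have b2 := hC2b p q ω hω
          linarith
  have e2 : Real.sqrt (∑ j, (multiDeriv A (fun x => postQ x q ω j) p)^2)
      ≤ (D0 + D1 + D2) * Pv q ^ ((∑ i, A i) + 4) := by
    calc Real.sqrt (∑ j, (multiDeriv A (fun x => postQ x q ω j) p)^2)
        ≤ ∑ j, |multiDeriv A (fun x => postQ x q ω j) p| :=
          sqrt_sum_sq_le _
      _ ≤ (D0 + D1 + D2) * Pv q ^ ((∑ i, A i) + 4) := by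
          rw [Fin.sum_univ_three]
          have b0 := hD0b p q ω hω
          have b1 := hD1b p q ω hω
          have b2 := hD2b p q ω hω
          linarith
  linarith

end Collision

/-- **Derivatives of the post-collision momenta**: for every multi-index `A` with
`|A| ≥ 1` there is `C > 0`, independent of `p`, such that for all `p, q ∈ ℝ³` and
unit vectors `ω ∈ 𝕊²`, `|∂^A_p p'| + |∂^A_p q'| ≤ C (q⁰)^{|A|+4}`. -/
theorem multiDeriv_postCollision_bound (A : Fin 3 → ℕ) (hA : 1 ≤ ∑ i, A i) :
    ∃ C > 0, ∀ p q ω : Fin 3 → ℝ, ω ⬝ᵥ ω = 1 →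
      Real.sqrt (∑ j, (multiDeriv A (fun x => postP x q ω j) p)^2)
        + Real.sqrt (∑ j, (multiDeriv A (fun x => postQ x q ω j) p)^2)
        ≤ C * Real.sqrt (1 + q ⬝ᵥ q) ^ ((∑ i, A i) + 4) := by
  exact Collision.main A hA

end
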